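/- If (G,τ,∂) is a Polish topometric group with the Steinhaus property, and τ' is another Polish group topology on G such that (G,τ',∂) is also a Polish topometric group, then τ = τ'. -/

import Mathlib

open Pointwise

/-- The open `ε`-enlargement of `A ⊆ G` with respect to the distance `D`. -/
def enclG {G : Type*} (D : G → G → ℝ) (ε : ℝ) (A : Set G) : Set G :=
  {g | ∃ b ∈ A, D g b < ε}

/-- `A` is σ-syndetic: countably many left translates of `A` cover `G`. -/
def SigmaSyndetic {G : Type*} [Group G] (A : Set G) : Prop :=
  ∃ t : ℕ → G, (⋃ n : ℕ, t n • A) = Set.univ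

/-- The sup metric on tuples induced by `D`. -/
noncomputable def supMetG {G : Type*} (D : G → G → ℝ) {n : ℕ} (x y : Fin n → G) : ℝ :=
  ⨆ i : Fin n, D (x i) (y i)

/-- `(G,τ,D)` is Steinhaus with exponent `k`: for every symmetric σ-syndetic `A` and
`ε > 0`, the identity lies in the interior of `(A^k)_ε`. -/
def SteinhausWith {G : Type*} [Group G] [TopologicalSpace G] (D : G → G → ℝ)
    (k : ℕ) : Prop :=
  ∀ A : Set G, A⁻¹ = A → SigmaSyndetic A →
    ∀ ε > (0 : ℝ), (1 : G) ∈ interior (enclG D ε (A ^ k))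

/-- The topometric group `(G,τ,D)` has ample generics: for every `n` and `ε > 0` some
tuple in `Gⁿ` has a diagonal conjugacy class whose `ε`-enlargement is comeagre. -/
def AmpleGenerics {G : Type*} [Group G] [TopologicalSpace G] (D : G → G → ℝ) : Prop :=
  ∀ n : ℕ, ∀ ε > (0 : ℝ), ∃ g : Fin n → G,
    {f : Fin n → G | ∃ k : G, supMetG D f (fun i => k * g i * k⁻¹) < ε}
      ∈ residual (Fin n → G)

open Topology Filter Set

section Helpers

variable {G : Type*}

/-- One can find a small symmetric open neighbourhood of `1` whose `(n+1)`-st power lies in a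
given neighbourhood of `1`. -/
private lemma symm_pow_nhds [Group G] [TopologicalSpace G] [IsTopologicalGroup G]
    (n : ℕ) {U : Set G} (hU : U ∈ 𝓝 (1 : G)) :
    ∃ V : Set G, IsOpen V ∧ (1 : G) ∈ V ∧ V⁻¹ = V ∧ V ^ (n + 1) ⊆ U := by
  induction n generalizing U with
  | zero =>
    obtain ⟨W, hWU, hWo, hW1⟩ := mem_nhds_iff.mp hU
    refine ⟨W ∩ W⁻¹, hWo.inter hWo.inv, ⟨hW1, by simpa using hW1⟩, ?_, ?_⟩
    · rw [Set.inter_inv, inv_inv, Set.inter_comm]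
    · rw [pow_one]
      exact fun x hx => hWU hx.1
  | succ n ih =>
    obtain ⟨W, hWo, hW1, hWW⟩ := exists_open_nhds_one_mul_subset hU
    obtain ⟨V, hVo, hV1, hVsymm, hVpow⟩ := ih (hWo.mem_nhds hW1)
    have hVWsub : V ∩ W ∩ (V ∩ W)⁻¹ ⊆ V ∩ W := fun x hx => hx.1
    refine ⟨V ∩ W ∩ (V ∩ W)⁻¹, (hVo.inter hWo).inter (hVo.inter hWo).inv,
      ⟨⟨hV1, hW1⟩, by simpa using And.intro hV1 hW1⟩, ?_, ?_⟩
    · rw [Set.inter_inv, inv_inv, Set.inter_comm]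
    · calc (V ∩ W ∩ (V ∩ W)⁻¹) ^ (n + 1 + 1)
          = (V ∩ W ∩ (V ∩ W)⁻¹) ^ (n + 1) * (V ∩ W ∩ (V ∩ W)⁻¹) := pow_succ _ _
        _ ⊆ W * W := Set.mul_subset_mul
            ((Set.pow_subset_pow_left (fun x hx => (hVWsub hx).1)).trans hVpow)
            (fun x hx => (hVWsub hx).2)
        _ ⊆ U := hWW

/-- In a separable topological group, any open neighbourhood of `1` is σ-syndetic. -/
private lemma sigmaSyndetic_of_isOpen [Group G] [TopologicalSpace G] [IsTopologicalGroup G]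
    [TopologicalSpace.SeparableSpace G] {V : Set G}
    (hVo : IsOpen V) (hV1 : (1 : G) ∈ V) : SigmaSyndetic V := by
  haveI : Nonempty G := ⟨1⟩
  obtain ⟨s, hsc, hsd⟩ := TopologicalSpace.exists_countable_dense G
  obtain ⟨t, ht⟩ := hsc.exists_eq_range hsd.nonempty
  refine ⟨t, Set.eq_univ_of_forall fun g => ?_⟩
  have hne : (g • V⁻¹ : Set G).Nonempty := ⟨g, ⟨1, by simpa using hV1, by simp⟩⟩
  have hopen : IsOpen (g • V⁻¹ : Set G) := hVo.inv.smul g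
  obtain ⟨x, hxV, hxs⟩ := hsd.inter_open_nonempty _ hopen hne
  obtain ⟨n, rfl⟩ : ∃ n, t n = x := by
    rw [ht] at hxs; obtain ⟨n, hn⟩ := hxs; exact ⟨n, hn⟩
  obtain ⟨y, hy, hxy⟩ := hxV
  refine Set.mem_iUnion.mpr ⟨n, ⟨y⁻¹, Set.mem_inv.mp hy, ?_⟩⟩
  have : t n = g * y := hxy.symm
  rw [this]
  simp [smul_eq_mul, mul_assoc]

/-- A nonempty open set in a Baire space is non-meagre. -/
private lemma not_isMeagre_of_isOpen' {X : Type*} [TopologicalSpace X] [BaireSpace X]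
    {U : Set X} (hU : IsOpen U) (hne : U.Nonempty) : ¬ IsMeagre U := by
  intro h
  have hd : Dense Uᶜ := dense_of_mem_residual h
  obtain ⟨x, hx1, hx2⟩ := hd.inter_open_nonempty U hU hne
  exact hx2 hx1

/-- A σ-syndetic set in a topological group whose topology is Baire is non-meagre. -/
private lemma not_isMeagre_of_sigmaSyndetic [Group G] [TopologicalSpace G]
    [IsTopologicalGroup G] [BaireSpace G] {V : Set G} (h : SigmaSyndetic V) :
    ¬ IsMeagre V := by
  intro hm
  obtain ⟨t, ht⟩ := h
  have hmeag : ∀ n : ℕ, IsMeagre (t n • V : Set G) := by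
    intro n
    have hpre : IsMeagre ((fun x => (t n)⁻¹ * x) ⁻¹' V) :=
      IsMeagre.preimage_of_isOpenMap (continuous_mul_left _)
        (Homeomorph.mulLeft ((t n)⁻¹)).isOpenMap hm
    have : (t n • V : Set G) = (fun x => (t n)⁻¹ * x) ⁻¹' V := by
      ext x
      simp [Set.mem_smul_set_iff_inv_smul_mem]
    rwa [this]
  have huniv : IsMeagre (Set.univ : Set G) := by
    rw [← ht, IsMeagre, Set.compl_iUnion]
    exact (countable_iInter_mem).mpr hmeag
  rw [IsMeagre, Set.compl_univ] at huniv
  have hd := dense_of_mem_residual huniv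
  haveI : Nonempty G := ⟨1⟩
  exact Set.not_nonempty_empty hd.nonempty

/-- Pettis' theorem: if `A` is Baire measurable and non-meagre in a topological group whose
topology is Baire, then `A * A⁻¹` is a neighbourhood of `1`. -/
private lemma pettis_thm [Group G] [TopologicalSpace G] [IsTopologicalGroup G]
    [BaireSpace G] {A : Set G} (hA : BaireMeasurableSet A) (hnm : ¬ IsMeagre A) :
    A * A⁻¹ ∈ 𝓝 (1 : G) := by
  obtain ⟨U, hUo, hAU⟩ := hA.residualEq_isOpen
  have hE : ∀ᵇ x : G, (x ∈ A ↔ x ∈ U) := hAU.mono fun x hx => iff_of_eq hx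
  have hUne : U.Nonempty := by
    by_contra hcon
    rw [Set.not_nonempty_iff_eq_empty] at hcon
    subst hcon
    refine hnm ?_
    exact Filter.mem_of_superset hE fun x hx hxA => (hx.mp hxA).elim
  obtain ⟨u0, hu0⟩ := hUne
  have h1mem : (1 : G) ∈ U * U⁻¹ := by
    simpa using Set.mul_mem_mul hu0 (Set.inv_mem_inv.mpr hu0)
  refine Filter.mem_of_superset (((hUo.mul_right).mem_nhds h1mem)) ?_
  rintro g ⟨u₁, hu₁, v, hv, rfl⟩
  -- `g = u₁ * v` with `v ∈ U⁻¹`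
  set g := u₁ * v with hg
  have hvU : v⁻¹ ∈ U := Set.mem_inv.mp hv
  -- the set of `x ∈ U` with `g * x ∈ U` is open and nonempty
  have hSo : IsOpen (U ∩ (fun x => g * x) ⁻¹' U) :=
    hUo.inter (hUo.preimage (continuous_mul_left g))
  have hSne : (U ∩ (fun x => g * x) ⁻¹' U).Nonempty := by
    refine ⟨v⁻¹, hvU, ?_⟩
    show g * v⁻¹ ∈ U
    rw [hg]
    simpa [mul_assoc] using hu₁
  have hSnm : ¬ IsMeagre (U ∩ (fun x => g * x) ⁻¹' U) := not_isMeagre_of_isOpen' hSo hSne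
  have hE2 : ∀ᵇ x : G, (g * x ∈ A ↔ g * x ∈ U) := by
    have htd : Filter.Tendsto (fun x : G => g * x) (residual G) (residual G) :=
      tendsto_residual_of_isOpenMap (continuous_mul_left g)
        (Homeomorph.mulLeft g).isOpenMap
    exact htd.eventually hE
  have hcomb := hE.and hE2
  have hinter : (U ∩ (fun x => g * x) ⁻¹' U ∩
      {x | (x ∈ A ↔ x ∈ U) ∧ (g * x ∈ A ↔ g * x ∈ U)}).Nonempty := by
    by_contra hcon
    rw [Set.not_nonempty_iff_eq_empty] at hcon
    refine hSnm (Filter.mem_of_superset hcomb fun x hx hxS => ?_)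
    exact Set.eq_empty_iff_forall_notMem.mp hcon x ⟨hxS, hx⟩
  obtain ⟨x, ⟨hxU, hgxU⟩, hx1, hx2⟩ := hinter
  have hxA : x ∈ A := hx1.mpr hxU
  have hgxA : g * x ∈ A := hx2.mpr hgxU
  have : (g * x) * x⁻¹ ∈ A * A⁻¹ := Set.mul_mem_mul hgxA (Set.inv_mem_inv.mpr hxA)
  simpa [mul_assoc] using this

private lemma mem_nhds_one_of_subset [Group G] [TopologicalSpace G] {S U : Set G}
    (h1 : (1 : G) ∈ interior S) (h2 : S ⊆ U) : U ∈ 𝓝 (1 : G) :=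
  mem_nhds_iff.mpr ⟨interior S, interior_subset.trans h2, isOpen_interior, h1⟩

/-- Direction A: a Steinhaus topology `τ` refines every Polish group topology compatible
with `D`. Instances here are for the "other" topology `τ'`. -/
private lemma dirA_aux [Group G] (τ : TopologicalSpace G) [TopologicalSpace G]
    [IsTopologicalGroup G] [PolishSpace G] (D : G → G → ℝ)
    (hD_bi : ∀ g h k : G, D (k * g) (k * h) = D g h ∧ D (g * k) (h * k) = D g h)
    (hD_symm : ∀ g h : G, D g h = D h g)
    (hD_ref' : ∀ U : Set G, IsOpen U → ∀ g ∈ U, ∃ ε > (0 : ℝ), {h | D g h < ε} ⊆ U)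
    (k : ℕ) (hSt : @SteinhausWith G _ τ D k) :
    ∀ U : Set G, U ∈ 𝓝 (1 : G) → U ∈ @nhds G τ 1 := by
  intro U hU
  obtain ⟨V, hVo, hV1, hVsymm, hVpow⟩ := symm_pow_nhds k hU
  obtain ⟨ε, hε, hball⟩ := hD_ref' V hVo 1 hV1
  haveI : TopologicalSpace.SeparableSpace G := inferInstance
  have hsynd : SigmaSyndetic V := sigmaSyndetic_of_isOpen hVo hV1
  have hsub : enclG D ε (V ^ k) ⊆ U := by
    rintro g ⟨b, hb, hgb⟩
    have h1 : D (b⁻¹ * g) 1 = D g b := by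
      simpa using (hD_bi g b b⁻¹).1
    have h2 : b⁻¹ * g ∈ V := by
      refine hball ?_
      show D 1 (b⁻¹ * g) < ε
      rw [hD_symm, h1]
      exact hgb
    have hgpow : g ∈ V ^ (k + 1) := by
      rw [pow_succ]
      simpa using Set.mul_mem_mul hb h2
    exact hVpow hgpow
  have hmem := hSt V hVsymm hsynd ε hε
  exact @mem_nhds_one_of_subset G _ τ _ _ hmem hsub

/-- Direction B helper: a Baire measurable σ-syndetic set `V` with `V * V⁻¹ ⊆ U` witnesses
that `U` is a neighbourhood of `1`. -/
private lemma dirB_aux [Group G] [TopologicalSpace G] [IsTopologicalGroup G]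
    [PolishSpace G] {V U : Set G} (hBM : BaireMeasurableSet V) (hsynd : SigmaSyndetic V)
    (hVU : V * V⁻¹ ⊆ U) : U ∈ 𝓝 (1 : G) := by
  haveI : BaireSpace G := by
    letI := TopologicalSpace.upgradeIsCompletelyMetrizable G
    infer_instance
  have hnm : ¬ IsMeagre V := not_isMeagre_of_sigmaSyndetic hsynd
  exact Filter.mem_of_superset (pettis_thm hBM hnm) hVU

/-- Lusin–Suslin transfer: if `id : (G,τ) → (G,τ')` is continuous between Polish spaces, then
`τ`-Borel sets are `τ'`-Borel. -/
private lemma borel_measurable_transfer (τ τ' : TopologicalSpace G)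
    (hPol : @PolishSpace G τ) (hPol' : @PolishSpace G τ')
    (hcont : @Continuous G G τ τ' id) {V : Set G}
    (hV : @MeasurableSet G (@borel G τ) V) : @MeasurableSet G (@borel G τ') V := by
  have h2 : @T2Space G τ' := by
    letI := τ'; letI := hPol'; infer_instance
  have emb : @MeasurableEmbedding G G (@borel G τ) (@borel G τ') id :=
    @Continuous.measurableEmbedding G G (@borel G τ') τ' h2 id
      (@BorelSpace.mk G τ' (@borel G τ') rfl) τ hPol (@borel G τ)
      (@BorelSpace.mk G τ (@borel G τ) rfl) hcont Function.injective_id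
  have himg := @MeasurableEmbedding.measurableSet_image' G G (@borel G τ) (@borel G τ')
    id emb V hV
  rwa [Set.image_id] at himg

end Helpers

/-- If `(G,τ,D)` is a Polish topometric group with the Steinhaus property
and `τ'` is another Polish group topology making `(G,τ',D)` a Polish topometric group,
then `τ = τ'`. -/
theorem stmt_12 {G : Type*} [Group G] (τ τ' : TopologicalSpace G)
    (hTG : @IsTopologicalGroup G τ _) (hPol : @PolishSpace G τ)
    (hTG' : @IsTopologicalGroup G τ' _) (hPol' : @PolishSpace G τ')
    (D : G → G → ℝ)
    (hD_eq : ∀ g h : G, D g h = 0 ↔ g = h)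
    (hD_symm : ∀ g h : G, D g h = D h g)
    (hD_tri : ∀ g h k : G, D g k ≤ D g h + D h k)
    (hD_bi : ∀ g h k : G, D (k * g) (k * h) = D g h ∧ D (g * k) (h * k) = D g h)
    (hD_ref : ∀ U : Set G, @IsOpen G τ U → ∀ g ∈ U, ∃ ε > (0 : ℝ), {h | D g h < ε} ⊆ U)
    (hD_lsc : ∀ r : ℝ,
      @IsClosed (G × G) (@instTopologicalSpaceProd G G τ τ) {p : G × G | D p.1 p.2 ≤ r})
    (hD_ref' : ∀ U : Set G, @IsOpen G τ' U → ∀ g ∈ U, ∃ ε > (0 : ℝ), {h | D g h < ε} ⊆ U)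
    (hD_lsc' : ∀ r : ℝ,
      @IsClosed (G × G) (@instTopologicalSpaceProd G G τ' τ') {p : G × G | D p.1 p.2 ≤ r})
    (hSt : ∃ k : ℕ, @SteinhausWith G _ τ D k) :
    τ = τ' := by
  obtain ⟨k, hSt⟩ := hSt
  -- Direction A: every τ'-neighbourhood of 1 is a τ-neighbourhood of 1.
  have hA : ∀ U : Set G, U ∈ @nhds G τ' 1 → U ∈ @nhds G τ 1 :=
    @dirA_aux G _ τ τ' hTG' hPol' D hD_bi hD_symm hD_ref' k hSt
  -- Hence `id : (G,τ) → (G,τ')` is continuous.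
  have hcont : @Continuous G G τ τ' id := by
    have h := @continuous_of_continuousAt_one G τ _ hTG G (G →* G) _ τ'
      hTG'.toContinuousMul _ _ (MonoidHom.id G) ?_
    · exact h
    · show Filter.Tendsto _ (@nhds G τ 1) (@nhds G τ' _)
      exact Filter.tendsto_def.mpr fun s hs => hA s hs
  -- Direction B: every τ-neighbourhood of 1 is a τ'-neighbourhood of 1.
  have hB : ∀ U : Set G, U ∈ @nhds G τ 1 → U ∈ @nhds G τ' 1 := by
    intro U hU
    obtain ⟨V, hVo, hV1, hVsymm, hVpow⟩ := @symm_pow_nhds G _ τ hTG 1 U hU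
    have hVU : V * V⁻¹ ⊆ U := by
      rw [hVsymm, ← sq]
      exact hVpow
    have hsynd : SigmaSyndetic V := by
      have hsep : @TopologicalSpace.SeparableSpace G τ := by
        letI := τ; letI := hPol; infer_instance
      exact @sigmaSyndetic_of_isOpen G _ τ hTG hsep V hVo hV1
    have hVm : @MeasurableSet G (@borel G τ) V :=
      MeasurableSpace.measurableSet_generateFrom hVo
    have hVm' : @MeasurableSet G (@borel G τ') V :=
      borel_measurable_transfer τ τ' hPol hPol' hcont hVm
    have hBM : @BaireMeasurableSet G τ' V := by
      letI := τ'; letI := hPol'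
      borelize G
      exact hVm'.baireMeasurableSet
    exact @dirB_aux G _ τ' hTG' hPol' V U hBM hsynd hVU
  refine @IsTopologicalGroup.ext G _ τ τ' hTG hTG' ?_
  exact Filter.ext fun s => ⟨fun h => hB s h, fun h => hA s h⟩
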